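/- Let δ = ±1, let k₀, k₁, k₂ ∈ ℝ \ {0}, let η ∈ ℝ, and let ψ : ℝ → ℝ be a smooth strictly monotone function (ψ′ ≠ 0 everywhere). Let u, v : U → ℝ be smooth functions on an open set U ⊆ ℝ² satisfying u_{xt} = k₁e^{k₀u}ψ(v_x), v_{xt} = k₁(δk₂^{−2} − k₀²)e^{k₀u}·u_x/ψ′(v_x) on U. Define F₁₁ = k₂^{−1}u_x, F₂₁ = η, F₃₁ = ηk₀k₂ + ψ(v_x), F₁₂ = 0, F₂₂ = −k₁k₂^{−1}e^{k₀u}, F₃₂ = −k₀k₁e^{k₀u}. Then on U the structure equations hold: −∂_t F₁₁ + ∂_x F₁₂ = F₃₁F₂₂ − F₃₂F₂₁, −∂_t F₂₁ + ∂_x F₂₂ = F₁₁F₃₂ − F₁₂F₃₁, −∂_t F₃₁ + ∂_x F₃₂ = δ(F₁₁F₂₂ − F₁₂F₂₁); hence this system describes pseudospherical surfaces (δ = 1), resp. spherical surfaces (δ = −1), with these associated functions. -/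

import Mathlib

open Real

/-- Partial derivative in the `x` direction of a function on the `(x, t)` plane. -/
noncomputable def pdx (f : ℝ × ℝ → ℝ) (p : ℝ × ℝ) : ℝ := fderiv ℝ f p (1, 0)

/-- Partial derivative in the `t` direction of a function on the `(x, t)` plane. -/
noncomputable def pdt (f : ℝ × ℝ → ℝ) (p : ℝ × ℝ) : ℝ := fderiv ℝ f p (0, 1)

/-- The structure equations of a surface of constant Gaussian curvature `-δ`. -/
def StructEqs (δ : ℝ) (U : Set (ℝ × ℝ)) (F11 F12 F21 F22 F31 F32 : ℝ × ℝ → ℝ) : Prop :=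
  ∀ p ∈ U,
    -(pdt F11 p) + pdx F12 p = F31 p * F22 p - F32 p * F21 p ∧
    -(pdt F21 p) + pdx F22 p = F11 p * F32 p - F12 p * F31 p ∧
    -(pdt F31 p) + pdx F32 p = δ * (F11 p * F22 p - F12 p * F21 p)

lemma pdx_contDiffOn_aux {f : ℝ × ℝ → ℝ} {U : Set (ℝ × ℝ)} (hf : ContDiffOn ℝ (⊤ : ℕ∞) f U)
    (hU : IsOpen U) : ContDiffOn ℝ (⊤ : ℕ∞) (pdx f) U := by
  have h := hf.fderiv_of_isOpen hU (m := (⊤ : ℕ∞)) (by simp)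
  exact h.clm_apply contDiffOn_const

theorem corollary_exp_family_describes_pss_ss (δ k0 k1 k2 η : ℝ)
    (hδ : δ = 1 ∨ δ = -1) (hk0 : k0 ≠ 0) (hk1 : k1 ≠ 0) (hk2 : k2 ≠ 0)
    (ψ : ℝ → ℝ) (hψ : ContDiff ℝ (⊤ : ℕ∞) ψ)
    (hψ' : ∀ s : ℝ, deriv ψ s ≠ 0) (hψmono : StrictMono ψ ∨ StrictAnti ψ)
    (U : Set (ℝ × ℝ)) (hU : IsOpen U)
    (u v : ℝ × ℝ → ℝ)
    (hu : ContDiffOn ℝ (⊤ : ℕ∞) u U) (hv : ContDiffOn ℝ (⊤ : ℕ∞) v U)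
    (heq1 : ∀ p ∈ U, pdt (pdx u) p = k1 * Real.exp (k0 * u p) * ψ (pdx v p))
    (heq2 : ∀ p ∈ U, pdt (pdx v) p =
      k1 * (δ * (k2 ^ 2)⁻¹ - k0 ^ 2) * Real.exp (k0 * u p) * pdx u p / deriv ψ (pdx v p)) :
    StructEqs δ U
      (fun q => k2⁻¹ * pdx u q)
      (fun _ => 0)
      (fun _ => η)
      (fun q => -(k1 * k2⁻¹) * Real.exp (k0 * u q))
      (fun q => η * k0 * k2 + ψ (pdx v q))
      (fun q => -(k0 * k1) * Real.exp (k0 * u q)) := by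
  intro p hp
  have hpU : U ∈ nhds p := hU.mem_nhds hp
  -- differentiability facts
  have hux : DifferentiableAt ℝ (pdx u) p :=
    ((pdx_contDiffOn_aux hu hU).differentiableOn (by simp)).differentiableAt hpU
  have hvx : DifferentiableAt ℝ (pdx v) p :=
    ((pdx_contDiffOn_aux hv hU).differentiableOn (by simp)).differentiableAt hpU
  have hud : DifferentiableAt ℝ u p :=
    (hu.differentiableOn (by simp)).differentiableAt hpU
  set L : (ℝ × ℝ) →L[ℝ] ℝ := fderiv ℝ u p with hL
  have hLd : HasFDerivAt u L p := hud.hasFDerivAt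
  -- derivative of c * exp (k0 * u ·)
  have hexp : ∀ c : ℝ, HasFDerivAt (fun q => c * Real.exp (k0 * u q))
      (c • (Real.exp (k0 * u p) • (k0 • L))) p := by
    intro c
    have h1 : HasFDerivAt (fun q => k0 * u q) (k0 • L) p := hLd.const_mul k0
    have h2 := (Real.hasDerivAt_exp (k0 * u p)).comp_hasFDerivAt p h1
    exact h2.const_mul c
  -- equation 1
  have e1 : pdt (fun q => k2⁻¹ * pdx u q) p = k2⁻¹ * pdt (pdx u) p := by
    have := fderiv_const_mul hux k2⁻¹
    simp only [pdt, this]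
    simp
  -- equation 2 middle term
  have e2 : ∀ c : ℝ, pdx (fun q => c * Real.exp (k0 * u q)) p
      = c * (Real.exp (k0 * u p) * (k0 * pdx u p)) := by
    intro c
    have := (hexp c).fderiv
    simp only [pdx, this]
    simp [pdx]
    exact Or.inl (Or.inl rfl)
  -- equation 3 first term
  have e3 : pdt (fun q => η * k0 * k2 + ψ (pdx v q)) p
      = deriv ψ (pdx v p) * pdt (pdx v) p := by
    have hψd : HasDerivAt ψ (deriv ψ (pdx v p)) (pdx v p) :=
      (hψ.differentiable (by simp) (pdx v p)).hasDerivAt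
    have h := (hψd.comp_hasFDerivAt p hvx.hasFDerivAt).const_add (η * k0 * k2)
    have h2 : HasFDerivAt (fun q => η * k0 * k2 + ψ (pdx v q))
        (deriv ψ (pdx v p) • fderiv ℝ (pdx v) p) p := h
    simp only [pdt, h2.fderiv]
    simp
  have hzero : ∀ c : ℝ, (pdx (fun _ => c) p = 0 ∧ pdt (fun _ => c) p = 0) := by
    intro c
    exact ⟨by simp [pdx], by simp [pdt]⟩
  refine ⟨?_, ?_, ?_⟩
  · rw [e1, heq1 p hp, (hzero 0).1]
    field_simp
    ring
  · rw [(hzero η).2, e2 (-(k1 * k2⁻¹))]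
    ring
  · rw [e3, heq2 p hp, e2 (-(k0 * k1)),
      mul_div_cancel₀ _ (hψ' (pdx v p))]
    ring
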